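/- Let G = (V, E) be a finite acyclic digraph and let (V1, E1), (V2, E2) be a separation of G along a pair {u, v} of distinct vertices. If u dominates v in H2 = (V2, E2), then for all vertices x, y ∈ V1, x dominates y in the digraph (V1, E1 ∪ {(u, v)}) if and only if x dominates y in G. -/

import Mathlib

/-- `x` dominates `y` in the digraph with edge set `E`: there is a directed
path with at least one edge from `x` to `y`. -/
def Dominates {α : Type*} (E : Finset (α × α)) (x y : α) : Prop :=
  Relation.TransGen (fun a b => (a, b) ∈ E) x y

/-- A separation of the finite digraph `(V, E)` along the pair `{u, v}` of
distinct vertices into `H1 = (V1, E1)` and `H2 = (V2, E2)`. -/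
structure Separation {α : Type*} [DecidableEq α] (V : Finset α) (E : Finset (α × α))
    (u v : α) (V1 V2 : Finset α) (E1 E2 : Finset (α × α)) : Prop where
  ne : u ≠ v
  vUnion : V1 ∪ V2 = V
  vInter : V1 ∩ V2 = {u, v}
  eDisjoint : Disjoint E1 E2
  eUnion : E1 ∪ E2 = E
  mem1 : ∀ e ∈ E1, e.1 ∈ V1 ∧ e.2 ∈ V1
  mem2 : ∀ e ∈ E2, e.1 ∈ V2 ∧ e.2 ∈ V2

/-- If `G` is acyclic and `u` dominates `v` in `H2`, then dominance on `V1`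
in `H1` augmented by the marker edge `(u, v)` is the same as in `G`. -/
theorem stmt4 {α : Type*} [DecidableEq α] (V V1 V2 : Finset α)
    (E E1 E2 : Finset (α × α)) (u v : α)
    (hsep : Separation V E u v V1 V2 E1 E2)
    (hacyc : ∀ x : α, ¬ Dominates E x x)
    (hdom : Dominates E2 u v) :
    ∀ x ∈ V1, ∀ y ∈ V1, (Dominates (insert (u, v) E1) x y ↔ Dominates E x y) := by
  obtain ⟨hne, hVu, hVi, hdisj, hEu, hm1, hm2⟩ := hsep
  have hE1sub : E1 ⊆ E := hEu ▸ Finset.subset_union_left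
  have hE2sub : E2 ⊆ E := hEu ▸ Finset.subset_union_right
  have hmono2 : ∀ a b : α, Dominates E2 a b → Dominates E a b :=
    fun a b h => Relation.TransGen.mono (fun p q hpq => hE2sub hpq) _ _ h
  have huv : ∀ z : α, z ∈ V1 → z ∈ V2 → z = u ∨ z = v := by
    intro z h1 h2
    have : z ∈ V1 ∩ V2 := Finset.mem_inter.mpr ⟨h1, h2⟩
    rw [hVi] at this
    simpa using this
  have hmarker : Dominates (insert (u, v) E1) u v :=
    Relation.TransGen.single (Finset.mem_insert_self _ _)
  intro x hx y hy
  constructor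
  · intro h
    clear hy
    induction h with
    | single h =>
      rcases Finset.mem_insert.mp h with h | h
      · obtain ⟨h1, h2⟩ := Prod.mk.injEq .. ▸ h
        subst h1; subst h2
        exact hmono2 _ _ hdom
      · exact Relation.TransGen.single (hE1sub h)
    | tail h' e ih =>
      rcases Finset.mem_insert.mp e with e | e
      · obtain ⟨h1, h2⟩ := Prod.mk.injEq .. ▸ e
        subst h1; subst h2
        exact Relation.TransGen.trans ih (hmono2 _ _ hdom)
      · exact Relation.TransGen.tail ih (hE1sub e)
  · intro h
    have key : ∀ z : α, Dominates E z y →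
        (z ∈ V1 → Dominates (insert (u, v) E1) z y) ∧
        (z ∈ V2 → (Dominates E2 u z → Dominates (insert (u, v) E1) u y) ∧
          (Dominates E2 v z → False)) := by
      intro z hz
      induction hz using Relation.TransGen.head_induction_on with
      | @single z' h =>
        constructor
        · intro hz1
          rw [← hEu] at h
          rcases Finset.mem_union.mp h with e | e
          · exact Relation.TransGen.single (Finset.mem_insert_of_mem e)
          · have hz2 : z' ∈ V2 := (hm2 _ e).1
            have hy2 : y ∈ V2 := (hm2 _ e).2
            rcases huv z' hz1 hz2 with rfl | rfl
            · rcases huv y hy hy2 with rfl | rfl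
              · exact absurd (Relation.TransGen.single (hE2sub e)) (hacyc _)
              · exact hmarker
            · rcases huv y hy hy2 with rfl | rfl
              · exact absurd (Relation.TransGen.tail (hmono2 _ _ hdom) (hE2sub e))
                  (hacyc _)
              · exact absurd (Relation.TransGen.single (hE2sub e)) (hacyc _)
        · intro hz2
          rw [← hEu] at h
          constructor
          · intro hu
            rcases Finset.mem_union.mp h with e | e
            · rcases huv z' (hm1 _ e).1 hz2 with rfl | rfl
              · exact absurd (hmono2 _ _ hu) (hacyc _)
              · exact Relation.TransGen.tail hmarker (Finset.mem_insert_of_mem e)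
            · have hy2 : y ∈ V2 := (hm2 _ e).2
              rcases huv y hy hy2 with rfl | rfl
              · exact absurd (Relation.TransGen.tail (hmono2 _ _ hu) (hE2sub e))
                  (hacyc _)
              · exact hmarker
          · intro hv
            rcases Finset.mem_union.mp h with e | e
            · rcases huv z' (hm1 _ e).1 hz2 with rfl | rfl
              · exact hacyc _ (Relation.TransGen.trans (hmono2 _ _ hdom) (hmono2 _ _ hv))
              · exact hacyc _ (hmono2 _ _ hv)
            · have hy2 : y ∈ V2 := (hm2 _ e).2
              rcases huv y hy hy2 with rfl | rfl
              · exact hacyc _ (Relation.TransGen.trans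
                  (Relation.TransGen.tail (hmono2 _ _ hv) (hE2sub e)) (hmono2 _ _ hdom))
              · exact hacyc _ (Relation.TransGen.tail (hmono2 _ _ hv) (hE2sub e))
      | @head z' w e hwy ihw =>
        constructor
        · intro hz1
          rw [← hEu] at e
          rcases Finset.mem_union.mp e with e | e
          · exact Relation.TransGen.head (Finset.mem_insert_of_mem e)
              (ihw.1 (hm1 _ e).2)
          · have hw2 : w ∈ V2 := (hm2 _ e).2
            rcases huv z' hz1 (hm2 _ e).1 with rfl | rfl
            · exact (ihw.2 hw2).1 (Relation.TransGen.single e)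
            · exact absurd (Relation.TransGen.single e) (fun hh => (ihw.2 hw2).2 hh)
        · intro hz2
          rw [← hEu] at e
          constructor
          · intro hu
            rcases Finset.mem_union.mp e with e | e
            · rcases huv z' (hm1 _ e).1 hz2 with rfl | rfl
              · exact absurd (hmono2 _ _ hu) (hacyc _)
              · exact Relation.TransGen.trans hmarker
                  (Relation.TransGen.head (Finset.mem_insert_of_mem e)
                    (ihw.1 (hm1 _ e).2))
            · exact (ihw.2 (hm2 _ e).2).1 (Relation.TransGen.tail hu e)
          · intro hv
            rcases Finset.mem_union.mp e with e | e
            · rcases huv z' (hm1 _ e).1 hz2 with rfl | rfl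
              · exact hacyc _ (Relation.TransGen.trans (hmono2 _ _ hdom) (hmono2 _ _ hv))
              · exact hacyc _ (hmono2 _ _ hv)
            · exact (ihw.2 (hm2 _ e).2).2 (Relation.TransGen.tail hv e)
    exact (key x h).1 hx
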